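/- Let f : ℝⁿ → ℝ be a polynomial of degree d ≥ 2, t₀ ∈ ℝ, a ∈ ℝⁿ, and γ(t) = Σ_{i ≤ D} a_i t^i (D = d^{n-1}) a real analytic arc lying in M_a(f) for t large with ‖γ(t)‖ → ∞ and f(γ(t)) → t₀ as t → ∞. Let γ̂ be the truncation of γ keeping only terms of order ≥ -(d-1)d^{n-1}. Then: (a) ‖γ̂(t)‖ → ∞; (b) f(γ̂(t)) → t₀; (c) (∂f/∂x_i)(γ̂(t)) → 0 for all i; (d) γ̂_j(t)·(∂f/∂x_i)(γ̂(t)) → 0 for all i, j, all limits as t → ∞. -/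

import Mathlib

open Filter Topology MvPolynomial Set
open scoped Pointwise

noncomputable section

/-- `f` agrees on `(0,∞)` with a Laurent polynomial with exponents `≤ b`. -/
def UB (f : ℝ → ℝ) (b : ℤ) : Prop :=
  ∃ (F : Finset ℤ) (c : ℤ → ℝ), (∀ k ∈ F, k ≤ b) ∧ ∀ t : ℝ, 0 < t → f t = ∑ k ∈ F, c k * t ^ k

theorem UB.mono {f b} (h : UB f b) {b'} (hb : b ≤ b') : UB f b' := by
  obtain ⟨F, c, hF, he⟩ := h
  exact ⟨F, c, fun k hk => (hF k hk).trans hb, he⟩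

theorem UB.congr {f g : ℝ → ℝ} {b} (h : UB f b) (hfg : ∀ t, 0 < t → f t = g t) : UB g b := by
  obtain ⟨F, c, hF, he⟩ := h
  exact ⟨F, c, hF, fun t ht => (hfg t ht) ▸ he t ht⟩

theorem UB_zero (b : ℤ) : UB (fun _ => 0) b :=
  ⟨∅, fun _ => 0, by simp, by simp⟩

theorem UB_const (r : ℝ) {b : ℤ} (hb : 0 ≤ b) : UB (fun _ => r) b :=
  ⟨{0}, fun _ => r, by simpa using hb, by simp⟩

theorem UB.add {f g b} (hf : UB f b) (hg : UB g b) : UB (fun t => f t + g t) b := by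
  obtain ⟨F, c, hF, hef⟩ := hf
  obtain ⟨G, e, hG, heg⟩ := hg
  refine ⟨F ∪ G, fun k => (if k ∈ F then c k else 0) + (if k ∈ G then e k else 0),
    fun k hk => ?_, fun t ht => ?_⟩
  · rcases Finset.mem_union.1 hk with h | h
    · exact hF k h
    · exact hG k h
  · show f t + g t = _
    rw [hef t ht, heg t ht]
    simp only [add_mul]
    rw [Finset.sum_add_distrib]
    simp only [ite_mul, zero_mul]
    congr 1
    · rw [Finset.sum_ite_mem, Finset.union_inter_cancel_left]
    · rw [Finset.sum_ite_mem, Finset.union_inter_cancel_right]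

theorem UB.neg {f b} (hf : UB f b) : UB (fun t => -(f t)) b := by
  obtain ⟨F, c, hF, hef⟩ := hf
  exact ⟨F, fun k => -(c k), hF, fun t ht => by show -f t = _; rw [hef t ht, ← Finset.sum_neg_distrib]; simp⟩

theorem UB.sub {f g b} (hf : UB f b) (hg : UB g b) : UB (fun t => f t - g t) b := by
  simpa [sub_eq_add_neg] using hf.add hg.neg

theorem UB.mul {f g b₁ b₂} (hf : UB f b₁) (hg : UB g b₂) : UB (fun t => f t * g t) (b₁ + b₂) := by
  obtain ⟨F, c, hF, hef⟩ := hf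
  obtain ⟨G, e, hG, heg⟩ := hg
  classical
  refine ⟨F + G, fun m => ∑ p ∈ (F ×ˢ G).filter (fun p => p.1 + p.2 = m), c p.1 * e p.2,
    fun m hm => ?_, fun t ht => ?_⟩
  · obtain ⟨k, hk, l, hl, rfl⟩ := Finset.mem_add.1 hm
    exact add_le_add (hF k hk) (hG l hl)
  · show f t * g t = _
    have maps : ∀ p ∈ F ×ˢ G, p.1 + p.2 ∈ F + G := fun p hp => by
      obtain ⟨hp1, hp2⟩ := Finset.mem_product.1 hp
      exact Finset.add_mem_add hp1 hp2
    calc f t * g t = ∑ p ∈ F ×ˢ G, c p.1 * e p.2 * t ^ (p.1 + p.2) := by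
          rw [hef t ht, heg t ht, Finset.sum_mul_sum, Finset.sum_product]
          refine Finset.sum_congr rfl fun i _ => Finset.sum_congr rfl fun j _ => ?_
          rw [zpow_add₀ (ne_of_gt ht)]; ring
      _ = ∑ m ∈ F + G, ∑ p ∈ (F ×ˢ G).filter (fun p => p.1 + p.2 = m),
            c p.1 * e p.2 * t ^ (p.1 + p.2) :=
          (Finset.sum_fiberwise_of_maps_to maps _).symm
      _ = _ := by
          refine Finset.sum_congr rfl fun m _ => ?_
          rw [Finset.sum_mul]
          refine Finset.sum_congr rfl fun p hp => ?_
          have hpm : p.1 + p.2 = m := (Finset.mem_filter.1 hp).2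
          rw [← hpm]

theorem UB.sum {ι : Type*} (S : Finset ι) (f : ι → ℝ → ℝ) (b : ℤ)
    (h : ∀ i ∈ S, UB (f i) b) : UB (fun t => ∑ i ∈ S, f i t) b := by
  classical
  induction S using Finset.induction_on with
  | empty => simpa using UB_zero b
  | @insert a S' hx ih =>
    simp only [Finset.sum_insert hx]
    exact (h a (Finset.mem_insert_self a S')).add
      (ih fun i hi => h i (Finset.mem_insert_of_mem hi))

theorem UB.prod {ι : Type*} (S : Finset ι) (f : ι → ℝ → ℝ) (b : ι → ℤ) (hb : ∀ i, 0 ≤ b i)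
    (h : ∀ i ∈ S, UB (f i) (b i)) : UB (fun t => ∏ i ∈ S, f i t) (∑ i ∈ S, b i) := by
  classical
  induction S using Finset.induction_on with
  | empty => simpa using UB_const 1 le_rfl
  | @insert a S' hx ih =>
    simp only [Finset.prod_insert hx, Finset.sum_insert hx]
    exact (h a (Finset.mem_insert_self a S')).mul
      (ih fun i hi => h i (Finset.mem_insert_of_mem hi))

theorem UB.tendsto_zero {f b} (hf : UB f b) (hb : b ≤ -1) : Tendsto f atTop (𝓝 0) := by
  obtain ⟨F, c, hF, hef⟩ := hf
  have : Tendsto (fun t : ℝ => ∑ k ∈ F, c k * t ^ k) atTop (𝓝 (∑ k ∈ F, (0:ℝ))) := by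
    refine tendsto_finset_sum _ fun k hk => ?_
    exact tendsto_const_mul_zpow_atTop_zero (lt_of_le_of_lt ((hF k hk).trans hb) (by norm_num))
  rw [Finset.sum_const, smul_zero] at this
  refine this.congr' ?_
  filter_upwards [eventually_gt_atTop (0:ℝ)] with t ht
  exact (hef t ht).symm

theorem tendsto_sum_shift (F : Finset ℤ) (c : ℤ → ℝ) (m : ℤ) (h : ∀ k ∈ F, k ≤ m) :
    Tendsto (fun t : ℝ => ∑ k ∈ F, c k * t ^ (k - m)) atTop
      (𝓝 (∑ k ∈ F, if k = m then c k else 0)) := by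
  refine tendsto_finset_sum _ fun k hk => ?_
  rcases eq_or_lt_of_le (h k hk) with rfl | hlt
  · simpa using tendsto_const_nhds
  · rw [if_neg (ne_of_lt hlt)]
    exact tendsto_const_mul_zpow_atTop_zero (by omega)

theorem sum_ite_eq_mem (F : Finset ℤ) (c : ℤ → ℝ) (m : ℤ) (hm : m ∈ F) :
    (∑ k ∈ F, if k = m then c k else 0) = c m := by
  rw [Finset.sum_ite_eq' F m c, if_pos hm]

theorem UB.canon {f : ℝ → ℝ} {b : ℤ} (h : UB f b) : ∃ (F : Finset ℤ) (c : ℤ → ℝ),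
    (∀ k ∈ F, k ≤ b ∧ c k ≠ 0) ∧ ∀ t : ℝ, 0 < t → f t = ∑ k ∈ F, c k * t ^ k := by
  classical
  obtain ⟨F, c, hF, he⟩ := h
  refine ⟨F.filter (fun k => c k ≠ 0), c, fun k hk => ⟨hF k (Finset.mem_filter.1 hk).1,
    (Finset.mem_filter.1 hk).2⟩, fun t ht => ?_⟩
  rw [he t ht, Finset.sum_filter_of_ne]
  intro k _ hne hc
  exact hne (by rw [hc, zero_mul])

theorem shift_eventually (F : Finset ℤ) (c : ℤ → ℝ) (m : ℤ) {f : ℝ → ℝ}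
    (he : ∀ t : ℝ, 0 < t → f t = ∑ k ∈ F, c k * t ^ k) :
    (fun t : ℝ => f t * t ^ (-m)) =ᶠ[atTop] fun t => ∑ k ∈ F, c k * t ^ (k - m) := by
  filter_upwards [eventually_gt_atTop (0:ℝ)] with t ht
  rw [he t ht, Finset.sum_mul]
  refine Finset.sum_congr rfl fun k _ => ?_
  rw [mul_assoc, ← zpow_add₀ (ne_of_gt ht), sub_eq_add_neg]

theorem UB.nonpos_of_tendsto {f : ℝ → ℝ} {b : ℤ} {L : ℝ} (h : UB f b)
    (hL : Tendsto f atTop (𝓝 L)) :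
    ∃ (F : Finset ℤ) (c : ℤ → ℝ), (∀ k ∈ F, k ≤ 0) ∧
      ∀ t : ℝ, 0 < t → f t = ∑ k ∈ F, c k * t ^ k := by
  classical
  obtain ⟨F, c, hF, he⟩ := h.canon
  refine ⟨F, c, fun k hk => ?_, he⟩
  by_contra hpos
  push_neg at hpos
  have hSne : (F.filter (fun k => 0 < k)).Nonempty := ⟨k, Finset.mem_filter.2 ⟨hk, hpos⟩⟩
  set S := F.filter (fun k => 0 < k) with hS
  set m := S.max' hSne with hm
  have hmS : m ∈ S := S.max'_mem hSne
  have hmF : m ∈ F := (Finset.mem_filter.1 hmS).1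
  have hm0 : 0 < m := (Finset.mem_filter.1 hmS).2
  have hle : ∀ j ∈ F, j ≤ m := fun j hj => by
    by_cases hj0 : 0 < j
    · exact S.le_max' j (Finset.mem_filter.2 ⟨hj, hj0⟩)
    · push_neg at hj0; exact hj0.trans hm0.le
  have h1 := tendsto_sum_shift F c m hle
  rw [sum_ite_eq_mem F c m hmF] at h1
  have h2 : Tendsto (fun t : ℝ => f t * t ^ (-m)) atTop (𝓝 0) := by
    have := hL.mul (tendsto_zpow_atTop_zero (neg_neg_of_pos hm0) (𝕜 := ℝ))
    simpa using this
  have := tendsto_nhds_unique (h2.congr' (shift_eventually F c m he)) h1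
  exact (hF m hmF).2 this.symm

theorem hasDerivAt_sum_zpow (F : Finset ℤ) (c : ℤ → ℝ) {t : ℝ} (ht : 0 < t) {f : ℝ → ℝ}
    (he : ∀ u : ℝ, 0 < u → f u = ∑ k ∈ F, c k * u ^ k) :
    HasDerivAt f (∑ k ∈ F, c k * ((k : ℝ) * t ^ (k - 1))) t := by
  have hd : HasDerivAt (fun u : ℝ => ∑ k ∈ F, c k * u ^ k)
      (∑ k ∈ F, c k * ((k : ℝ) * t ^ (k - 1))) t :=
    HasDerivAt.fun_sum fun k _ => (hasDerivAt_zpow k t (Or.inl (ne_of_gt ht))).const_mul (c k)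
  refine hd.congr_of_eventuallyEq ?_
  filter_upwards [Ioi_mem_nhds ht] with u hu using he u hu

theorem UB.deriv_of_tendsto {f : ℝ → ℝ} {b : ℤ} {L : ℝ} (h : UB f b)
    (hL : Tendsto f atTop (𝓝 L)) :
    ∃ f' : ℝ → ℝ, (∀ t : ℝ, 0 < t → HasDerivAt f (f' t) t) ∧
      Tendsto (fun t => t * f' t) atTop (𝓝 0) := by
  obtain ⟨F, c, hF, he⟩ := h.nonpos_of_tendsto hL
  refine ⟨fun t => ∑ k ∈ F, c k * ((k : ℝ) * t ^ (k - 1)), fun t ht =>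
    hasDerivAt_sum_zpow F c ht he, ?_⟩
  have h1 : Tendsto (fun t : ℝ => ∑ k ∈ F, (c k * k) * t ^ k) atTop (𝓝 (∑ k ∈ F, (0:ℝ))) := by
    refine tendsto_finset_sum _ fun k hk => ?_
    rcases eq_or_lt_of_le (hF k hk) with h0 | hlt
    · have : (fun t : ℝ => (c k * k) * t ^ k) = fun _ => 0 := by
        funext t; simp [h0]
      rw [this]; simpa using tendsto_const_nhds
    · exact tendsto_const_mul_zpow_atTop_zero hlt
  rw [Finset.sum_const, smul_zero] at h1
  refine h1.congr' ?_
  filter_upwards [eventually_gt_atTop (0:ℝ)] with t ht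
  rw [Finset.mul_sum]
  refine Finset.sum_congr rfl fun k _ => ?_
  have h3 : (t : ℝ) ^ (k - 1) * t = t ^ k := by
    rw [zpow_sub_one₀ (ne_of_gt ht), mul_assoc, inv_mul_cancel₀ (ne_of_gt ht), mul_one]
  calc c k * (k:ℝ) * t ^ k = c k * (k:ℝ) * (t ^ (k - 1) * t) := by rw [h3]
    _ = t * (c k * ((k:ℝ) * t ^ (k - 1))) := by ring

theorem UB.deriv_of_atTop {f : ℝ → ℝ} {b : ℤ} (h : UB f b) (hT : Tendsto f atTop atTop) :
    ∃ f' : ℝ → ℝ, (∀ t : ℝ, 0 < t → HasDerivAt f (f' t) t) ∧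
      ∀ᶠ t in atTop, 0 < f' t ∧ f t ≤ 2 * (t * f' t) := by
  classical
  obtain ⟨F, c, hF, he⟩ := h.canon
  have hFne : F.Nonempty := by
    rw [Finset.nonempty_iff_ne_empty]
    intro hne
    refine not_tendsto_atTop_of_tendsto_nhds (a := (0:ℝ)) ?_ hT
    refine tendsto_const_nhds.congr' ?_
    filter_upwards [eventually_gt_atTop (0:ℝ)] with t ht
    rw [he t ht, hne, Finset.sum_empty]
  set m := F.max' hFne with hm
  have hmF : m ∈ F := F.max'_mem hFne
  have hle : ∀ j ∈ F, j ≤ m := fun j hj => F.le_max' j hj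
  have hlim1 : Tendsto (fun t : ℝ => f t * t ^ (-m)) atTop (𝓝 (c m)) := by
    have h1 := tendsto_sum_shift F c m hle
    rw [sum_ite_eq_mem F c m hmF] at h1
    exact h1.congr' (shift_eventually F c m he).symm
  have hm1 : 1 ≤ m := by
    by_contra hmle
    push_neg at hmle
    refine not_tendsto_atTop_of_tendsto_nhds (a := (∑ k ∈ F, if k = 0 then c k else 0)) ?_ hT
    have h0 := tendsto_sum_shift F c 0 (fun j hj => (hle j hj).trans (by omega))
    simp only [sub_zero] at h0
    refine h0.congr' ?_
    filter_upwards [eventually_gt_atTop (0:ℝ)] with t ht using (he t ht).symm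
  have hcm : 0 < c m := by
    have hnn : 0 ≤ c m := by
      refine ge_of_tendsto hlim1 ?_
      filter_upwards [eventually_gt_atTop (0:ℝ), hT.eventually_ge_atTop 0] with t ht hft
      exact mul_nonneg hft (zpow_nonneg ht.le _)
    exact hnn.lt_of_ne (Ne.symm (hF m hmF).2)
  refine ⟨fun t => ∑ k ∈ F, c k * ((k : ℝ) * t ^ (k - 1)), fun t ht =>
    hasDerivAt_sum_zpow F c ht he, ?_⟩
  have hlim2 : Tendsto (fun t : ℝ =>
      (t * ∑ k ∈ F, c k * ((k : ℝ) * t ^ (k - 1))) * t ^ (-m)) atTop (𝓝 ((m : ℝ) * c m)) := by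
    have h2 := tendsto_sum_shift F (fun k => c k * k) m hle
    rw [Finset.sum_ite_eq' F m (fun k => c k * (k:ℝ)), if_pos hmF] at h2
    rw [show c m * (m:ℝ) = (m:ℝ) * c m from mul_comm _ _] at h2
    refine h2.congr' ?_
    filter_upwards [eventually_gt_atTop (0:ℝ)] with t ht
    rw [Finset.mul_sum, Finset.sum_mul]
    refine Finset.sum_congr rfl fun k _ => ?_
    have h3 : (t:ℝ) ^ (k - 1) * t = t ^ k := by
      rw [zpow_sub_one₀ (ne_of_gt ht), mul_assoc, inv_mul_cancel₀ (ne_of_gt ht), mul_one]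
    have h4 : (t:ℝ) ^ k * t ^ (-m) = t ^ (k - m) := by
      rw [← zpow_add₀ (ne_of_gt ht), sub_eq_add_neg]
    calc c k * (k:ℝ) * t ^ (k - m) = c k * (k:ℝ) * (t ^ k * t ^ (-m)) := by rw [h4]
      _ = t * (c k * ((k:ℝ) * t ^ (k - 1))) * t ^ (-m) := by
          rw [← h3]; ring
  have hratio : Tendsto (fun t : ℝ =>
      (t * ∑ k ∈ F, c k * ((k : ℝ) * t ^ (k - 1))) / f t) atTop (𝓝 (m : ℝ)) := by
    have hd := hlim2.div hlim1 (ne_of_gt hcm)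
    rw [mul_div_assoc, div_self (ne_of_gt hcm), mul_one] at hd
    refine hd.congr' ?_
    filter_upwards [eventually_gt_atTop (0:ℝ)] with t ht
    simp only [Pi.div_apply]
    rw [mul_div_mul_right _ _ (zpow_ne_zero _ (ne_of_gt ht) : (t:ℝ) ^ (-m) ≠ 0)]
  have hhalf : ∀ᶠ t : ℝ in atTop,
      (1/2 : ℝ) ≤ (t * ∑ k ∈ F, c k * ((k : ℝ) * t ^ (k - 1))) / f t := by
    refine hratio.eventually (eventually_ge_nhds ?_)
    have : (1:ℝ) ≤ (m:ℝ) := by exact_mod_cast hm1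
    linarith
  filter_upwards [eventually_gt_atTop (0:ℝ), hT.eventually_gt_atTop 0, hhalf] with t ht hft hh
  set D := ∑ k ∈ F, c k * ((k : ℝ) * t ^ (k - 1)) with hD
  have h5 : f t / 2 ≤ t * D := by
    rw [le_div_iff₀ hft] at hh
    linarith [hh]
  have h6 : 0 < t * D := lt_of_lt_of_le (by positivity) h5
  constructor
  · by_contra hD0
    push_neg at hD0
    nlinarith
  · linarith

section Tri

variable {D E : ℤ}

/-- `f` and `g` both have Laurent exponents `≤ e*D` and their difference has
exponents `≤ (e-1)*D - E - 1`. -/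
def Tri (D E : ℤ) (f g : ℝ → ℝ) (e : ℕ) : Prop :=
  UB f (e * D) ∧ UB g (e * D) ∧ UB (fun t => f t - g t) (((e : ℤ) - 1) * D - E - 1)

theorem Tri.congr {f g f' g' : ℝ → ℝ} {e : ℕ} (h : Tri D E f g e)
    (hf : ∀ t, f t = f' t) (hg : ∀ t, g t = g' t) : Tri D E f' g' e :=
  ⟨h.1.congr fun t _ => hf t, h.2.1.congr fun t _ => hg t,
    h.2.2.congr fun t _ => by rw [hf, hg]⟩

theorem Tri.const (r : ℝ) : Tri D E (fun _ => r) (fun _ => r) 0 :=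
  ⟨by simpa using UB_const r le_rfl, by simpa using UB_const r le_rfl,
    (UB_zero _).congr fun t _ => by ring⟩

theorem Tri.zero (e : ℕ) : Tri D E (fun _ => 0) (fun _ => 0) e :=
  ⟨UB_zero _, UB_zero _, (UB_zero _).congr fun t _ => by ring⟩

theorem Tri.add {f g f' g' : ℝ → ℝ} {e : ℕ} (h : Tri D E f g e) (h' : Tri D E f' g' e) :
    Tri D E (fun t => f t + f' t) (fun t => g t + g' t) e :=
  ⟨h.1.add h'.1, h.2.1.add h'.2.1,
    (h.2.2.add h'.2.2).congr fun t _ => by ring⟩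

theorem Tri.mul {f g f' g' : ℝ → ℝ} {e₁ e₂ : ℕ} (h : Tri D E f g e₁) (h' : Tri D E f' g' e₂) :
    Tri D E (fun t => f t * f' t) (fun t => g t * g' t) (e₁ + e₂) := by
  have hb : ((e₁:ℤ) - 1) * D - E - 1 + (e₂:ℤ) * D = (e₁:ℤ) * D + (((e₂:ℤ) - 1) * D - E - 1) := by
    ring
  refine ⟨(h.1.mul h'.1).mono (le_of_eq (by push_cast; ring)),
    (h.2.1.mul h'.2.1).mono (le_of_eq (by push_cast; ring)), ?_⟩
  have h1 := (h.1.mul h'.2.2).add ((h.2.2.mul h'.2.1).mono (le_of_eq hb))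
  exact ((h1.congr fun t _ => by ring).mono (le_of_eq (by push_cast; ring)))

theorem Tri.mono (hD : 0 ≤ D) {f g : ℝ → ℝ} {e e' : ℕ} (h : Tri D E f g e) (he : e ≤ e') :
    Tri D E f g e' := by
  have hc : ((e:ℤ)) ≤ (e':ℤ) := by exact_mod_cast he
  exact ⟨h.1.mono (mul_le_mul_of_nonneg_right hc hD),
    h.2.1.mono (mul_le_mul_of_nonneg_right hc hD),
    h.2.2.mono (by nlinarith)⟩

theorem Tri.pow {f g : ℝ → ℝ} {e : ℕ} (h : Tri D E f g e) :
    ∀ k : ℕ, Tri D E (fun t => f t ^ k) (fun t => g t ^ k) (k * e)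
  | 0 => by
    simpa using (Tri.const 1 : Tri D E _ _ 0)
  | (k+1) => by
    have h1 := ((Tri.pow h k).mul h).congr
      (fun t => (pow_succ (f t) k).symm) (fun t => (pow_succ (g t) k).symm)
    have h2 : k * e + e = (k + 1) * e := by ring
    exact h2 ▸ h1

theorem Tri.sum {ι : Type*} (S : Finset ι) (F G : ι → ℝ → ℝ) (e : ℕ)
    (h : ∀ i ∈ S, Tri D E (F i) (G i) e) :
    Tri D E (fun t => ∑ i ∈ S, F i t) (fun t => ∑ i ∈ S, G i t) e := by
  classical
  induction S using Finset.induction_on with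
  | empty => simpa using Tri.zero e
  | @insert a S' hx ih =>
    refine ((h a (Finset.mem_insert_self a S')).add
      (ih fun i hi => h i (Finset.mem_insert_of_mem hi))).congr
      (fun t => ?_) (fun t => ?_) <;> rw [Finset.sum_insert hx]

theorem Tri.prod {ι : Type*} (S : Finset ι) (F G : ι → ℝ → ℝ) (e : ι → ℕ)
    (h : ∀ i ∈ S, Tri D E (F i) (G i) (e i)) :
    Tri D E (fun t => ∏ i ∈ S, F i t) (fun t => ∏ i ∈ S, G i t) (∑ i ∈ S, e i) := by
  classical
  induction S using Finset.induction_on with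
  | empty => simpa using (Tri.const 1 : Tri D E _ _ 0)
  | @insert a S' hx ih =>
    have := (h a (Finset.mem_insert_self a S')).mul
      (ih fun i hi => h i (Finset.mem_insert_of_mem hi))
    rw [← Finset.sum_insert hx] at this
    refine this.congr (fun t => ?_) (fun t => ?_) <;> rw [Finset.prod_insert hx]

end Tri

section Eval

variable {D E : ℤ}

theorem Tri.eval {n : ℕ} (hD : 0 ≤ D) (x y : ℝ → EuclideanSpace ℝ (Fin n))
    (Q : MvPolynomial (Fin n) ℝ) (e : ℕ) (hQ : ∀ m ∈ Q.support, (∑ j, m j) ≤ e)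
    (hbase : ∀ j, Tri D E (fun t => x t j) (fun t => y t j) 1) :
    Tri D E (fun t => MvPolynomial.eval (fun j => x t j) Q)
      (fun t => MvPolynomial.eval (fun j => y t j) Q) e := by
  have h1 : ∀ m ∈ Q.support, Tri D E (fun t => Q.coeff m * ∏ j, (x t j) ^ (m j))
      (fun t => Q.coeff m * ∏ j, (y t j) ^ (m j)) e := by
    intro m hm
    have hj : ∀ j ∈ Finset.univ, Tri D E (fun t => x t j ^ m j) (fun t => y t j ^ m j)
        (m j * 1) := fun j _ => (hbase j).pow (m j)
    have hp := Tri.prod Finset.univ _ _ _ hj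
    have hc := (Tri.const (Q.coeff m) (D := D) (E := E)).mul hp
    rw [zero_add] at hc
    have he : (∑ j, m j * 1) = ∑ j, m j := by simp
    rw [he] at hc
    exact hc.mono hD (hQ m hm)
  have h2 := Tri.sum Q.support _ _ e h1
  refine h2.congr (fun t => ?_) (fun t => ?_) <;> rw [MvPolynomial.eval_eq']

theorem support_deg_le {n : ℕ} (P : MvPolynomial (Fin n) ℝ) (m : Fin n →₀ ℕ)
    (hm : m ∈ P.support) : (∑ j, m j) ≤ P.totalDegree := by
  have h := MvPolynomial.le_totalDegree hm
  rwa [Finsupp.sum_fintype _ _ (fun _ => rfl)] at h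

theorem support_pderiv_deg_le {n : ℕ} (i : Fin n) (P : MvPolynomial (Fin n) ℝ)
    (m : Fin n →₀ ℕ) (hm : m ∈ (MvPolynomial.pderiv i P).support) :
    (∑ j, m j) + 1 ≤ P.totalDegree := by
  classical
  have hrep : MvPolynomial.pderiv i P =
      ∑ v ∈ P.support, MvPolynomial.monomial (v - Finsupp.single i 1) (P.coeff v * v i) := by
    conv_lhs => rw [P.as_sum]
    rw [map_sum]
    exact Finset.sum_congr rfl fun v _ => MvPolynomial.pderiv_monomial
  rw [hrep] at hm
  have h2 := MvPolynomial.support_sum hm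
  obtain ⟨v, hv, hm2⟩ := Finset.mem_biUnion.1 h2
  have h3 := MvPolynomial.support_monomial_subset hm2
  rw [Finset.mem_singleton] at h3
  subst h3
  have hvi : v i ≠ 0 := by
    intro h0
    rw [h0] at hm2
    simp [MvPolynomial.support_monomial] at hm2
  have hdeg := support_deg_le P v hv
  have hsum : (∑ j, (v - Finsupp.single i 1 : Fin n →₀ ℕ) j) + 1 = ∑ j, v j := by
    rw [← Finset.add_sum_erase Finset.univ
        (fun j => (v - Finsupp.single i 1 : Fin n →₀ ℕ) j) (Finset.mem_univ i),
      ← Finset.add_sum_erase Finset.univ (fun j => v j) (Finset.mem_univ i)]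
    have h4 : ∀ j ∈ Finset.univ.erase i,
        (fun j => (v - Finsupp.single i 1 : Fin n →₀ ℕ) j) j = (fun j => v j) j := by
      intro j hj
      simp only []
      rw [Finsupp.tsub_apply, Finsupp.single_apply, if_neg (Finset.ne_of_mem_erase hj).symm]
      omega
    rw [Finset.sum_congr rfl h4]
    have h5 : (v - Finsupp.single i 1 : Fin n →₀ ℕ) i = v i - 1 := by
      rw [Finsupp.tsub_apply, Finsupp.single_apply, if_pos rfl]
    rw [h5]
    omega
  omega

end Eval

section FE

/-- The polynomial function `ℝⁿ → ℝ` associated to `P`. -/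
def fe (n : ℕ) (P : MvPolynomial (Fin n) ℝ) (x : EuclideanSpace ℝ (Fin n)) : ℝ :=
  MvPolynomial.eval (fun j => x j) P

/-- The Milnor set `M_a(f)`: points where `grad f(x)` and `x - a` are linearly dependent. -/
def Milnor1 (n : ℕ) (P : MvPolynomial (Fin n) ℝ) (a : EuclideanSpace ℝ (Fin n)) :
    Set (EuclideanSpace ℝ (Fin n)) :=
  {x | ¬ LinearIndependent ℝ ![gradient (fe n P) x, x - a]}

theorem fe_hasFDerivAt {n : ℕ} (P : MvPolynomial (Fin n) ℝ) (x : EuclideanSpace ℝ (Fin n)) :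
    HasFDerivAt (fe n P)
      (∑ i : Fin n, MvPolynomial.eval (fun j => x j) (MvPolynomial.pderiv i P) •
        (EuclideanSpace.proj i : EuclideanSpace ℝ (Fin n) →L[ℝ] ℝ)) x := by
  induction P using MvPolynomial.induction_on with
  | C a =>
    have h1 : fe n (MvPolynomial.C a) = fun _ => a := funext fun y => by simp [fe]
    simp only [h1, MvPolynomial.pderiv_C, map_zero, zero_smul, Finset.sum_const_zero]
    exact hasFDerivAt_const a x
  | add p q hp hq =>
    have h1 := hp.fun_add hq
    have h2 : (fun y => fe n p y + fe n q y) = fe n (p + q) := by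
      funext y; simp [fe]
    rw [h2] at h1
    refine h1.congr_fderiv (Eq.symm ?_)
    rw [← Finset.sum_add_distrib]
    exact Finset.sum_congr rfl fun i _ => by rw [map_add, map_add, add_smul]
  | mul_X p i hp =>
    have hXi : HasFDerivAt (fun y : EuclideanSpace ℝ (Fin n) => y i)
        (EuclideanSpace.proj i : EuclideanSpace ℝ (Fin n) →L[ℝ] ℝ) x := by
      refine (EuclideanSpace.proj (𝕜 := ℝ) i).hasFDerivAt.congr_of_eventuallyEq
        (Filter.Eventually.of_forall fun y => ?_)
      simp
    have h1 := hp.fun_mul hXi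
    have h2 : (fun y => fe n p y * y i) = fe n (p * MvPolynomial.X i) := by
      funext y; simp [fe]
    rw [h2] at h1
    refine h1.congr_fderiv (Eq.symm ?_)
    ext v
    simp only [ContinuousLinearMap.sum_apply, ContinuousLinearMap.smul_apply,
      PiLp.proj_apply, smul_eq_mul, ContinuousLinearMap.add_apply]
    have hterm : ∀ j : Fin n, MvPolynomial.eval (fun j => x j)
        (MvPolynomial.pderiv j (p * MvPolynomial.X i)) * v j
        = MvPolynomial.eval (fun j => x j) (MvPolynomial.pderiv j p) * x i * v j
          + (if j = i then fe n p x * v j else 0) := by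
      intro j
      rw [MvPolynomial.pderiv_mul]
      by_cases hj : j = i
      · subst hj
        simp [fe]; ring
      · rw [MvPolynomial.pderiv_X_of_ne (Ne.symm hj)]
        simp [hj, fe]
    rw [Finset.sum_congr rfl fun j _ => hterm j, Finset.sum_add_distrib,
      Finset.sum_ite_eq' Finset.univ i (fun j => fe n p x * v j), if_pos (Finset.mem_univ i)]
    rw [Finset.mul_sum, add_comm]
    congr 1
    exact Finset.sum_congr rfl fun j _ => by ring

end FE

def gvec (n : ℕ) (P : MvPolynomial (Fin n) ℝ) (x : EuclideanSpace ℝ (Fin n)) :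
    EuclideanSpace ℝ (Fin n) :=
  (WithLp.equiv 2 (Fin n → ℝ)).symm
    (fun i => MvPolynomial.eval (fun j => x j) (MvPolynomial.pderiv i P))

theorem gvec_apply {n : ℕ} (P : MvPolynomial (Fin n) ℝ) (x : EuclideanSpace ℝ (Fin n))
    (i : Fin n) : gvec n P x i = MvPolynomial.eval (fun j => x j) (MvPolynomial.pderiv i P) :=
  rfl

theorem fe_hasGradientAt {n : ℕ} (P : MvPolynomial (Fin n) ℝ) (x : EuclideanSpace ℝ (Fin n)) :
    HasGradientAt (fe n P) (gvec n P x) x := by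
  rw [hasGradientAt_iff_hasFDerivAt]
  refine (fe_hasFDerivAt P x).congr_fderiv (Eq.symm ?_)
  ext v
  rw [InnerProductSpace.toDual_apply_apply]
  simp only [PiLp.inner_apply, RCLike.inner_apply, conj_trivial,
    ContinuousLinearMap.sum_apply, ContinuousLinearMap.smul_apply, PiLp.proj_apply,
    smul_eq_mul]
  exact Finset.sum_congr rfl fun i _ => by rw [gvec_apply, mul_comm]

theorem gradient_fe {n : ℕ} (P : MvPolynomial (Fin n) ℝ) (x : EuclideanSpace ℝ (Fin n)) :
    gradient (fe n P) x = gvec n P x :=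
  (fe_hasGradientAt P x).gradient

theorem euclid_sum_apply {n : ℕ} {ι : Type*} (s : Finset ι) (f : ι → EuclideanSpace ℝ (Fin n))
    (j : Fin n) : (∑ i ∈ s, f i) j = ∑ i ∈ s, f i j := by
  classical
  induction s using Finset.induction_on with
  | empty => rw [Finset.sum_empty, Finset.sum_empty, PiLp.zero_apply]
  | @insert a S hx ih => rw [Finset.sum_insert hx, Finset.sum_insert hx, PiLp.add_apply, ih]

theorem euclid_coord_le {n : ℕ} (x : EuclideanSpace ℝ (Fin n)) (i : Fin n) : |x i| ≤ ‖x‖ := by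
  rw [EuclideanSpace.norm_eq, ← Real.sqrt_sq_eq_abs]
  refine Real.sqrt_le_sqrt ?_
  refine Finset.single_le_sum (f := fun j => ‖x j‖ ^ 2) (fun j _ => by positivity)
    (Finset.mem_univ i) |>.trans_eq' ?_
  rw [Real.norm_eq_abs, sq_abs]

theorem euclid_norm_sq {n : ℕ} (x : EuclideanSpace ℝ (Fin n)) : ‖x‖ ^ 2 = ∑ j, (x j) ^ 2 := by
  rw [EuclideanSpace.norm_eq, Real.sq_sqrt (by positivity)]
  exact Finset.sum_congr rfl fun j _ => by rw [Real.norm_eq_abs, sq_abs]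

/-- Properties of the truncation `γ̂` (keeping only terms of order `≥ -(d-1)d^{n-1}`) of an
arc `γ(t) = Σ_{i ≤ d^{n-1}} aᵢ tⁱ` lying in the Milnor set with `‖γ(t)‖ → ∞` and
`f(γ(t)) → t₀`: (a) `‖γ̂(t)‖ → ∞`; (b) `f(γ̂(t)) → t₀`; (c) `∂f/∂xᵢ(γ̂(t)) → 0`;
(d) `γ̂ⱼ(t) ∂f/∂xᵢ(γ̂(t)) → 0`, all as `t → ∞`. -/
theorem truncation_properties (n d : ℕ) (hd : 2 ≤ d)
    (P : MvPolynomial (Fin n) ℝ) (hdeg : P.totalDegree = d)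
    (a : EuclideanSpace ℝ (Fin n)) (t₀ : ℝ)
    (s : Finset ℤ) (A : ℤ → EuclideanSpace ℝ (Fin n))
    (hs : ∀ i ∈ s, i ≤ (d : ℤ) ^ (n - 1))
    (γ γhat : ℝ → EuclideanSpace ℝ (Fin n))
    (hγ : ∀ t, γ t = ∑ i ∈ s, t ^ i • A i)
    (hγhat : ∀ t, γhat t =
      ∑ i ∈ s.filter (fun i => -(((d : ℤ) - 1) * (d : ℤ) ^ (n - 1)) ≤ i), t ^ i • A i)
    (hM : ∃ R : ℝ, ∀ t > R, γ t ∈ Milnor1 n P a)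
    (hnorm : Tendsto (fun t => ‖γ t‖) atTop atTop)
    (hlim : Tendsto (fun t => fe n P (γ t)) atTop (𝓝 t₀)) :
    Tendsto (fun t => ‖γhat t‖) atTop atTop ∧
    Tendsto (fun t => fe n P (γhat t)) atTop (𝓝 t₀) ∧
    (∀ i : Fin n,
      Tendsto (fun t => MvPolynomial.eval (fun k => γhat t k) (MvPolynomial.pderiv i P))
        atTop (𝓝 0)) ∧
    (∀ i j : Fin n,
      Tendsto (fun t => γhat t j *
          MvPolynomial.eval (fun k => γhat t k) (MvPolynomial.pderiv i P))
        atTop (𝓝 0)) := by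
  classical
  obtain ⟨R, hMR⟩ := hM
  set D : ℤ := (d : ℤ) ^ (n - 1) with hDdef
  set E : ℤ := ((d : ℤ) - 1) * D with hEdef
  have hd1 : (1 : ℤ) ≤ (d : ℤ) := by exact_mod_cast Nat.one_le_of_lt hd
  have hD1 : 1 ≤ D := one_le_pow₀ hd1
  have hD0 : 0 ≤ D := by omega
  have hE1 : D ≤ E := by nlinarith [hD1, hd1]
  have hE0 : 0 ≤ E := by omega
  -- component formulas
  have happ : ∀ t : ℝ, ∀ j : Fin n, γ t j = ∑ i ∈ s, A i j * t ^ i := by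
    intro t j
    rw [hγ t, euclid_sum_apply]
    exact Finset.sum_congr rfl fun i _ => by rw [PiLp.smul_apply, smul_eq_mul, mul_comm]
  have happhat : ∀ t : ℝ, ∀ j : Fin n,
      γhat t j = ∑ i ∈ s.filter (fun i => -E ≤ i), A i j * t ^ i := by
    intro t j
    rw [hγhat t, euclid_sum_apply]
    exact Finset.sum_congr rfl fun i _ => by rw [PiLp.smul_apply, smul_eq_mul, mul_comm]
  have hdiffv : ∀ t : ℝ, γ t - γhat t = ∑ i ∈ s.filter (fun i => ¬(-E ≤ i)), t ^ i • A i := by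
    intro t
    rw [hγ t, hγhat t, ← Finset.sum_filter_add_sum_filter_not s (fun i => -E ≤ i)
      (fun i => t ^ i • A i)]
    rw [hEdef, hDdef]
    abel
  -- the Tri base
  have hbase : ∀ j : Fin n, Tri D E (fun t => γ t j) (fun t => γhat t j) 1 := by
    intro j
    have hcast : ((1:ℕ) : ℤ) * D = D := by push_cast; ring
    refine ⟨?_, ?_, ?_⟩
    · exact UB.mono (f := fun t => γ t j) (b := D)
        ⟨s, fun i => A i j, fun k hk => hs k hk, fun t _ => happ t j⟩ (le_of_eq hcast.symm)
    · exact UB.mono (f := fun t => γhat t j) (b := D)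
        ⟨s.filter (fun i => -E ≤ i), fun i => A i j, fun k hk =>
          hs k (Finset.mem_filter.1 hk).1, fun t _ => happhat t j⟩ (le_of_eq hcast.symm)
    · refine ⟨s.filter (fun i => ¬(-E ≤ i)), fun i => A i j, fun k hk => ?_, fun t _ => ?_⟩
      · have := (Finset.mem_filter.1 hk).2
        push_cast
        omega
      · show γ t j - γhat t j = _
        have h1 := congrFun (congrArg (fun (x : EuclideanSpace ℝ (Fin n)) (j : Fin n) => x j)
          (hdiffv t)) j
        simp only [PiLp.sub_apply] at h1
        rw [h1, euclid_sum_apply]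
        exact Finset.sum_congr rfl fun i _ => by rw [PiLp.smul_apply, smul_eq_mul, mul_comm]
  -- Tri for P and its partial derivatives
  have htriP : Tri D E (fun t => MvPolynomial.eval (fun j => γ t j) P)
      (fun t => MvPolynomial.eval (fun j => γhat t j) P) d := by
    refine Tri.eval hD0 γ γhat P d (fun m hm => ?_) hbase
    exact hdeg ▸ support_deg_le P m hm
  have htriPD : ∀ i : Fin n, Tri D E
      (fun t => MvPolynomial.eval (fun j => γ t j) (MvPolynomial.pderiv i P))
      (fun t => MvPolynomial.eval (fun j => γhat t j) (MvPolynomial.pderiv i P)) (d - 1) := by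
    intro i
    refine Tri.eval hD0 γ γhat (MvPolynomial.pderiv i P) (d - 1) (fun m hm => ?_) hbase
    have := support_pderiv_deg_le i P m hm
    omega
  have hcastd : ((d - 1 : ℕ) : ℤ) = (d : ℤ) - 1 := by
    push_cast [Nat.cast_sub (by omega : 1 ≤ d)]; ring
  -- difference limits
  have hdlimP : Tendsto (fun t => fe n P (γ t) - fe n P (γhat t)) atTop (𝓝 0) := by
    refine (htriP.2.2).tendsto_zero (le_of_eq ?_)
    push_cast
    rw [hEdef]; ring
  have hdlimPD : ∀ i : Fin n, Tendsto (fun t =>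
      MvPolynomial.eval (fun j => γ t j) (MvPolynomial.pderiv i P)
      - MvPolynomial.eval (fun j => γhat t j) (MvPolynomial.pderiv i P)) atTop (𝓝 0) := by
    intro i
    refine ((htriPD i).2.2).tendsto_zero ?_
    rw [hcastd, hEdef]
    nlinarith [hD1]
  -- norm of the tail tends to zero
  have hdnorm : Tendsto (fun t => ‖γ t - γhat t‖) atTop (𝓝 0) := by
    refine squeeze_zero' (Eventually.of_forall fun t => norm_nonneg _)
      (Eventually.of_forall fun t => ?_) (g := fun t =>
        ∑ i ∈ s.filter (fun i => ¬(-E ≤ i)), |t ^ i| * ‖A i‖) ?_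
    · rw [hdiffv t]
      refine (norm_sum_le _ _).trans_eq (Finset.sum_congr rfl fun i _ => ?_)
      rw [norm_smul, Real.norm_eq_abs]
    · have h0 : Tendsto (fun t : ℝ => ∑ i ∈ s.filter (fun i => ¬(-E ≤ i)), |t ^ i| * ‖A i‖)
          atTop (𝓝 (∑ i ∈ s.filter (fun i => ¬(-E ≤ i)), (0:ℝ))) := by
        refine tendsto_finset_sum _ fun i hi => ?_
        have hi0 : i < 0 := by
          have := (Finset.mem_filter.1 hi).2
          omega
        have h1 := (tendsto_zpow_atTop_zero hi0 (𝕜 := ℝ)).abs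
        rw [abs_zero] at h1
        simpa using h1.mul_const ‖A i‖
      simpa using h0
  -- part (a)
  have parta : Tendsto (fun t => ‖γhat t‖) atTop atTop := by
    refine tendsto_atTop_mono' atTop ?_
      ((tendsto_atTop_add_const_right atTop (-1) hnorm))
    filter_upwards [hdnorm.eventually (eventually_le_nhds (by norm_num : (0:ℝ) < 1))] with t ht
    have h2 : ‖γ t‖ ≤ ‖γhat t‖ + ‖γ t - γhat t‖ := by
      calc ‖γ t‖ = ‖(γ t - γhat t) + γhat t‖ := by rw [sub_add_cancel]
        _ ≤ ‖γ t - γhat t‖ + ‖γhat t‖ := norm_add_le _ _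
        _ = ‖γhat t‖ + ‖γ t - γhat t‖ := by ring
    linarith
  -- part (b)
  have partb : Tendsto (fun t => fe n P (γhat t)) atTop (𝓝 t₀) := by
    have h1 := hlim.sub hdlimP
    rw [sub_zero] at h1
    exact h1.congr fun t => by ring
  -- Laurent calculus for φ = f ∘ γ
  have hφUB : UB (fun t => fe n P (γ t)) (((d:ℕ):ℤ) * D) := htriP.1
  obtain ⟨φ', hφ'd, hφ'lim⟩ := hφUB.deriv_of_tendsto hlim
  -- the function h = ‖γ - a‖²
  set h : ℝ → ℝ := fun t => ∑ j, (γ t j - a j) ^ 2 with hhdef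
  have hhUB : UB h (2 * D) := by
    refine UB.sum Finset.univ _ _ (fun j _ => ?_)
    have h1 : UB (fun t => γ t j - a j) D :=
      ((hbase j).1.mono (le_of_eq (by push_cast; ring))).sub (UB_const (a j) hD0)
    have h2 := h1.mul h1
    rw [show D + D = 2 * D by ring] at h2
    exact h2.congr fun t _ => by ring
  have hnormsq : ∀ t, h t = ‖γ t - a‖ ^ 2 := by
    intro t
    rw [euclid_norm_sq]
    exact Finset.sum_congr rfl fun j _ => by rw [PiLp.sub_apply]
  have hhT : Tendsto h atTop atTop := by
    have h1 : Tendsto (fun t => ‖γ t‖ - ‖a‖) atTop atTop :=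
      (tendsto_atTop_add_const_right atTop (-‖a‖) hnorm).congr fun t => by ring
    refine tendsto_atTop_mono' atTop ?_ h1
    filter_upwards [h1.eventually_ge_atTop 1] with t ht
    have h2 : ‖γ t‖ - ‖a‖ ≤ ‖γ t - a‖ := by
      have := norm_sub_norm_le (γ t) a
      linarith
    have h3 : (1:ℝ) ≤ ‖γ t - a‖ := le_trans ht h2
    have h4 : ‖γ t - a‖ ≤ ‖γ t - a‖ ^ 2 := by nlinarith
    rw [hnormsq t]
    linarith
  obtain ⟨h', hh'd, hh'ev⟩ := hhUB.deriv_of_atTop hhT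
  -- derivative of γ
  set γd : ℝ → EuclideanSpace ℝ (Fin n) := fun t => ∑ i ∈ s, ((i:ℝ) * t ^ (i - 1)) • A i
    with hγddef
  have hγd : ∀ t : ℝ, 0 < t → HasDerivAt γ (γd t) t := by
    intro t ht
    have h1 : HasDerivAt (fun u : ℝ => ∑ i ∈ s, u ^ i • A i) (γd t) t :=
      HasDerivAt.fun_sum fun i _ => (hasDerivAt_zpow i t (Or.inl (ne_of_gt ht))).smul_const (A i)
    exact h1.congr_of_eventuallyEq (Eventually.of_forall hγ)
  -- chain rule identifications
  have hφeq : ∀ t : ℝ, 0 < t → φ' t = ∑ i, gvec n P (γ t) i * γd t i := by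
    intro t ht
    have h1 := (fe_hasFDerivAt P (γ t)).comp_hasDerivAt t (hγd t ht)
    have h2 : (∑ i : Fin n, MvPolynomial.eval (fun j => γ t j) (MvPolynomial.pderiv i P) •
        (EuclideanSpace.proj i : EuclideanSpace ℝ (Fin n) →L[ℝ] ℝ)) (γd t)
        = ∑ i, gvec n P (γ t) i * γd t i := by
      simp only [ContinuousLinearMap.sum_apply, ContinuousLinearMap.smul_apply,
        PiLp.proj_apply, smul_eq_mul]
      exact Finset.sum_congr rfl fun i _ => by rw [gvec_apply]
    rw [h2] at h1
    exact (hφ'd t ht).unique h1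
  have hγdj : ∀ (t : ℝ), 0 < t → ∀ j, HasDerivAt (fun u => γ u j) (γd t j) t := by
    intro t ht j
    have h1 := (EuclideanSpace.proj (𝕜 := ℝ) j).hasFDerivAt.comp_hasDerivAt t (hγd t ht)
    exact h1
  have hheq : ∀ t : ℝ, 0 < t → h' t = ∑ j, 2 * (γ t j - a j) * γd t j := by
    intro t ht
    have h2 : HasDerivAt h (∑ j, 2 * (γ t j - a j) * γd t j) t := by
      refine HasDerivAt.fun_sum fun j _ => ?_
      have h3 := ((hγdj t ht j).sub_const (a j)).fun_pow 2
      simpa [pow_one] using h3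
    exact (hh'd t ht).unique h2
  -- the key estimate
  have hkey : ∀ᶠ t in atTop, ‖γ t‖ * ‖gvec n P (γ t)‖ ≤ 8 * |t * φ' t| := by
    filter_upwards [eventually_gt_atTop (0:ℝ), eventually_gt_atTop R,
      hh'ev, hnorm.eventually_ge_atTop (2 * ‖a‖ + 1)] with t ht htR hh' hga
    obtain ⟨hh'pos, hhle⟩ := hh'
    have hXnorm : ‖a‖ + 1 ≤ ‖γ t - a‖ := by
      have := norm_sub_norm_le (γ t) a
      linarith
    have hXpos : 0 < ‖γ t - a‖ := by linarith [norm_nonneg a]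
    have hXne : γ t - a ≠ 0 := fun h0 => by rw [h0, norm_zero] at hXpos; exact lt_irrefl _ hXpos
    have hMil := hMR t htR
    rw [Milnor1, Set.mem_setOf_eq, gradient_fe] at hMil
    have hdep : ∃ c : ℝ, gvec n P (γ t) = c • (γ t - a) := by
      by_cases hG0 : gvec n P (γ t) = 0
      · exact ⟨0, by rw [hG0, zero_smul]⟩
      · rw [LinearIndependent.pair_iff' hG0] at hMil
        push_neg at hMil
        obtain ⟨r, hr⟩ := hMil
        have hr0 : r ≠ 0 := fun h0 => hXne (by rw [h0, zero_smul] at hr; exact hr.symm)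
        exact ⟨r⁻¹, by rw [← hr, smul_smul, inv_mul_cancel₀ hr0, one_smul]⟩
    obtain ⟨c, hc⟩ := hdep
    have hGi : ∀ i, gvec n P (γ t) i = c * (γ t i - a i) := fun i => by
      rw [hc, PiLp.smul_apply, smul_eq_mul, PiLp.sub_apply]
    have h1 : φ' t = c * ∑ i, (γ t i - a i) * γd t i := by
      rw [hφeq t ht, Finset.mul_sum]
      exact Finset.sum_congr rfl fun i _ => by rw [hGi i]; ring
    have h2 : h' t = 2 * ∑ i, (γ t i - a i) * γd t i := by
      rw [hheq t ht, Finset.mul_sum]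
      exact Finset.sum_congr rfl fun i _ => by ring
    have hrel : 2 * φ' t = c * h' t := by rw [h1, h2]; ring
    have habs : 2 * |φ' t| = |c| * h' t := by
      have h3 := congrArg abs hrel
      rwa [abs_mul, abs_mul, abs_two, abs_of_pos hh'pos] at h3
    have hnormG : ‖gvec n P (γ t)‖ = |c| * ‖γ t - a‖ := by
      rw [hc, norm_smul, Real.norm_eq_abs]
    have hγle : ‖γ t‖ ≤ 2 * ‖γ t - a‖ := by
      have h4 : ‖γ t‖ ≤ ‖γ t - a‖ + ‖a‖ := by
        calc ‖γ t‖ = ‖(γ t - a) + a‖ := by rw [sub_add_cancel]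
          _ ≤ ‖γ t - a‖ + ‖a‖ := norm_add_le _ _
      linarith
    have htabs : 8 * |t * φ' t| = 8 * (t * |φ' t|) := by
      rw [abs_mul, abs_of_pos ht]
    rw [htabs]
    calc ‖γ t‖ * ‖gvec n P (γ t)‖
        ≤ (2 * ‖γ t - a‖) * (|c| * ‖γ t - a‖) := by
          rw [hnormG]
          exact mul_le_mul hγle le_rfl (by positivity) (by positivity)
      _ = 2 * |c| * (‖γ t - a‖ ^ 2) := by ring
      _ = 2 * |c| * h t := by rw [hnormsq t]
      _ ≤ 2 * |c| * (2 * (t * h' t)) := by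
          refine mul_le_mul_of_nonneg_left hhle (by positivity)
      _ = 2 * (t * (2 * (|c| * h' t))) := by ring
      _ = 2 * (t * (2 * (2 * |φ' t|))) := by rw [habs]
      _ = 8 * (t * |φ' t|) := by ring
  have hkey0 : Tendsto (fun t => ‖γ t‖ * ‖gvec n P (γ t)‖) atTop (𝓝 0) := by
    refine squeeze_zero' (Eventually.of_forall fun t => by positivity) hkey ?_
    have h8 := (hφ'lim.abs).const_mul (8:ℝ)
    simpa using h8
  -- gradient limits along γ
  have hGlim : ∀ i : Fin n,
      Tendsto (fun t => MvPolynomial.eval (fun k => γ t k) (MvPolynomial.pderiv i P))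
        atTop (𝓝 0) := by
    intro i
    refine squeeze_zero_norm' ?_ hkey0
    filter_upwards [hnorm.eventually_ge_atTop 1] with t ht
    have h1 : |gvec n P (γ t) i| ≤ ‖gvec n P (γ t)‖ := euclid_coord_le _ i
    have h2 : ‖gvec n P (γ t)‖ ≤ ‖γ t‖ * ‖gvec n P (γ t)‖ :=
      le_mul_of_one_le_left (norm_nonneg _) ht
    rw [Real.norm_eq_abs, show MvPolynomial.eval (fun k => γ t k) (MvPolynomial.pderiv i P)
      = gvec n P (γ t) i from (gvec_apply P (γ t) i).symm]
    linarith
  have hGjlim : ∀ i j : Fin n,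
      Tendsto (fun t => γ t j * MvPolynomial.eval (fun k => γ t k) (MvPolynomial.pderiv i P))
        atTop (𝓝 0) := by
    intro i j
    refine squeeze_zero_norm' (Eventually.of_forall fun t => ?_) hkey0
    rw [Real.norm_eq_abs, abs_mul, show MvPolynomial.eval (fun k => γ t k)
      (MvPolynomial.pderiv i P) = gvec n P (γ t) i from (gvec_apply P (γ t) i).symm]
    exact mul_le_mul (euclid_coord_le _ j) (euclid_coord_le _ i) (abs_nonneg _) (norm_nonneg _)
  -- part (c)
  have partc : ∀ i : Fin n,
      Tendsto (fun t => MvPolynomial.eval (fun k => γhat t k) (MvPolynomial.pderiv i P))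
        atTop (𝓝 0) := by
    intro i
    have h1 := (hGlim i).sub (hdlimPD i)
    rw [sub_zero] at h1
    exact h1.congr fun t => by ring
  -- part (d)
  have partd : ∀ i j : Fin n,
      Tendsto (fun t => γhat t j *
        MvPolynomial.eval (fun k => γhat t k) (MvPolynomial.pderiv i P)) atTop (𝓝 0) := by
    intro i j
    have hδ : Tendsto (fun t => γ t j - γhat t j) atTop (𝓝 0) := by
      refine (hbase j).2.2.tendsto_zero ?_
      push_cast
      linarith [hE0]
    have h2 : Tendsto (fun t => (γ t j - γhat t j) *
        MvPolynomial.eval (fun k => γ t k) (MvPolynomial.pderiv i P)) atTop (𝓝 0) := by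
      simpa using hδ.mul (hGlim i)
    have h3 : Tendsto (fun t => γhat t j *
        (MvPolynomial.eval (fun k => γ t k) (MvPolynomial.pderiv i P)
          - MvPolynomial.eval (fun k => γhat t k) (MvPolynomial.pderiv i P))) atTop (𝓝 0) := by
      have hu := (hbase j).2.1.mul (htriPD i).2.2
      refine hu.tendsto_zero (le_of_eq ?_)
      rw [hcastd, hEdef]
      push_cast
      ring
    have h4 := ((hGjlim i j).sub h2).sub h3
    simp only [sub_zero] at h4
    exact h4.congr fun t => by ring
  exact ⟨parta, partb, partc, partd⟩
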